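/- If γ̂ minimizes the Lasso-penalized calibration objective L over ℝ^{1+p}, then the fitted inverse-probability weights over the instrumented group sum to the sample size: (1/n)·Σ_{i=1}^n Z_i/π̂_i = 1. -/

import Mathlib

open Finset

/-- If `γ̂` minimizes the Lasso-penalized calibration objective, the fitted
inverse-probability weights over the instrumented group sum to the sample size. -/
theorem stmt_5 (n p : ℕ) (hn : 1 ≤ n) (hp : 1 ≤ p)
    (Z : Fin n → ℝ) (hZ : ∀ i, Z i = 0 ∨ Z i = 1)
    (f : Fin n → Fin (p + 1) → ℝ) (hf0 : ∀ i, f i 0 = 1)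
    (lam : ℝ) (hlam : 0 ≤ lam)
    (L : (Fin (p + 1) → ℝ) → ℝ)
    (hL : ∀ γ, L γ = (1 / (n : ℝ)) * ∑ i, (Z i * Real.exp (-(∑ j, γ j * f i j))
          + (1 - Z i) * (∑ j, γ j * f i j))
        + lam * ∑ j : Fin p, |γ j.succ|)
    (γhat : Fin (p + 1) → ℝ) (hmin : ∀ γ, L γhat ≤ L γ)
    (πhat : Fin n → ℝ)
    (hπ : ∀ i, πhat i = 1 / (1 + Real.exp (-(∑ j, γhat j * f i j)))) :
    (1 / (n : ℝ)) * ∑ i, Z i / πhat i = 1 := by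
  set u : Fin n → ℝ := fun i => ∑ j, γhat j * f i j with hu
  -- perturbation in the intercept direction
  set γ' : ℝ → (Fin (p + 1) → ℝ) := fun t => Function.update γhat 0 (γhat 0 + t) with hγ'
  have hsum : ∀ t (i : Fin n), (∑ j, γ' t j * f i j) = u i + t := by
    intro t i
    have : ∀ j : Fin (p+1), γ' t j * f i j = γhat j * f i j + (if j = 0 then t else 0) := by
      intro j
      by_cases h : j = 0
      · subst h; simp [hγ', hf0 i]
      · simp [hγ', Function.update_of_ne h, h]
    simp only [this, Finset.sum_add_distrib, Finset.sum_ite_eq', Finset.mem_univ, if_true]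
    rfl
  have hpen : ∀ t, (∑ j : Fin p, |γ' t j.succ|) = ∑ j : Fin p, |γhat j.succ| := by
    intro t
    refine Finset.sum_congr rfl fun j _ => ?_
    simp [hγ', Function.update_of_ne (Fin.succ_ne_zero j)]
  set g : ℝ → ℝ := fun t =>
    (1 / (n : ℝ)) * ∑ i, (Z i * Real.exp (-(u i + t)) + (1 - Z i) * (u i + t))
      + lam * ∑ j : Fin p, |γhat j.succ| with hg
  have hLg : ∀ t, L (γ' t) = g t := by
    intro t
    rw [hL, hg]
    simp only [hsum t, hpen t]
  have hγ0 : γ' 0 = γhat := by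
    funext j; by_cases h : j = 0
    · subst h; simp [hγ']
    · simp [hγ', Function.update_of_ne h]
  have hg0 : ∀ t, g 0 ≤ g t := by
    intro t
    have := hmin (γ' t)
    rw [hLg t] at this
    calc g 0 = L (γ' 0) := (hLg 0).symm
    _ = L γhat := by rw [hγ0]
    _ ≤ g t := this
  -- derivative of g at 0
  set D : ℝ := (1 / (n : ℝ)) * ∑ i, (-(Z i * Real.exp (-(u i))) + (1 - Z i)) with hD
  have hderiv : HasDerivAt g D 0 := by
    have hterm : ∀ i : Fin n, HasDerivAt
        (fun t : ℝ => Z i * Real.exp (-(u i + t)) + (1 - Z i) * (u i + t))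
        (-(Z i * Real.exp (-(u i))) + (1 - Z i)) 0 := by
      intro i
      have h1 : HasDerivAt (fun t : ℝ => -(u i + t)) (-1) 0 := by
        exact ((hasDerivAt_id (0:ℝ)).const_add (u i)).neg
      have h2 := h1.exp
      have h3 := h2.const_mul (Z i)
      have h4 := ((hasDerivAt_id (0:ℝ)).const_add (u i)).const_mul (1 - Z i)
      have h5 := h3.add h4
      refine h5.congr_deriv ?_
      simp
    have hsumD := HasDerivAt.fun_sum (u := Finset.univ) (fun i _ => hterm i)
    have := (hsumD.const_mul (1 / (n : ℝ))).add_const (lam * ∑ j : Fin p, |γhat j.succ|)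
    simpa [hg, hD, Finset.mul_sum] using this
  have hDzero : D = 0 := by
    have hmin' : IsLocalMin g 0 := (isMinOn_univ_iff.2 fun t => hg0 t).isLocalMin (by simp)
    have := hmin'.hasDerivAt_eq_zero hderiv
    exact this
  have hnpos : (0:ℝ) < n := by exact_mod_cast hn
  have hS : ∑ i, (-(Z i * Real.exp (-(u i))) + (1 - Z i)) = 0 := by
    have : (1 / (n : ℝ)) ≠ 0 := by positivity
    rw [hD] at hDzero
    field_simp at hDzero
    simpa using hDzero
  have hπi : ∀ i, Z i / πhat i = Z i * (1 + Real.exp (-(u i))) := by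
    intro i
    have hpos : (0:ℝ) < 1 + Real.exp (-(u i)) := by positivity
    rw [hπ i]
    field_simp
    rfl
  have hsumZ : ∑ i, Z i / πhat i = (n : ℝ) := by
    have : ∑ i, Z i * (1 + Real.exp (-(u i)))
        = ∑ i : Fin n, (1:ℝ) - ∑ i, (-(Z i * Real.exp (-(u i))) + (1 - Z i)) := by
      rw [← Finset.sum_sub_distrib]
      exact Finset.sum_congr rfl fun i _ => by ring
    simp only [hπi, this, hS, sub_zero, Finset.sum_const, Finset.card_univ,
      Fintype.card_fin, nsmul_eq_mul, mul_one]
  rw [hsumZ]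
  field_simp
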